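/- Let H₁ and H₂ be complex Hilbert spaces and let L : H₁ × H₂ → H₁ × H₂ be the bounded block lower-triangular operator L = [[A, 0], [B, C]], where A : H₁ → H₁, B : H₁ → H₂ and C : H₂ → H₂ are bounded linear operators. Then L is unitary if and only if the following three conditions hold: (1) A is a co-isometry, i.e. A A* = I on H₁; (2) C is an isometry, i.e. C* C = I on H₂; (3) there exists a surjective linear isometry V from the closed subspace ker A of H₁ onto the closed subspace (range C)ᗮ of H₂ such that B x = V (P x) for all x ∈ H₁, where P denotes the orthogonal projection of H₁ onto ker A. -/

import Mathlib

open ContinuousLinearMap in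
set_option maxHeartbeats 1000000 in
/-- Lemma 7.1 (Appendix): a block lower-triangular operator
`L = [[A, 0], [B, C]]` on the Hilbert space direct sum `H₁ ⊕ H₂` is unitary
iff `A` is a co-isometry, `C` is an isometry, and `B = V ∘ P` where `P` is the
orthogonal projection onto `ker A` and `V` is a unitary map from `ker A`
onto `(range C)ᗮ`. -/
theorem stmt_0
    {H₁ H₂ : Type*}
    [NormedAddCommGroup H₁] [InnerProductSpace ℂ H₁] [CompleteSpace H₁]
    [NormedAddCommGroup H₂] [InnerProductSpace ℂ H₂] [CompleteSpace H₂]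
    (A : H₁ →L[ℂ] H₁) (B : H₁ →L[ℂ] H₂) (C : H₂ →L[ℂ] H₂)
    (L : WithLp 2 (H₁ × H₂) →L[ℂ] WithLp 2 (H₁ × H₂))
    (hL : ∀ (x : H₁) (y : H₂),
      L ((WithLp.equiv 2 (H₁ × H₂)).symm (x, y)) =
        (WithLp.equiv 2 (H₁ × H₂)).symm (A x, B x + C y)) :
    L ∈ unitary (WithLp 2 (H₁ × H₂) →L[ℂ] WithLp 2 (H₁ × H₂)) ↔
      (A.comp (ContinuousLinearMap.adjoint A) = ContinuousLinearMap.id ℂ H₁ ∧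
       (ContinuousLinearMap.adjoint C).comp C = ContinuousLinearMap.id ℂ H₂ ∧
       ∃ V : (LinearMap.ker (A : H₁ →ₗ[ℂ] H₁)) ≃ₗᵢ[ℂ] ((LinearMap.range (C : H₂ →ₗ[ℂ] H₂))ᗮ : Submodule ℂ H₂),
         ∀ x : H₁, B x = V (Submodule.orthogonalProjectionOnto (LinearMap.ker (A : H₁ →ₗ[ℂ] H₁)) x)) := by
  set e := (WithLp.equiv 2 (H₁ × H₂)).symm with he
  have hL' : ∀ v : WithLp 2 (H₁ × H₂), L v = e (A v.ofLp.1, B v.ofLp.1 + C v.ofLp.2) := fun v => hL v.ofLp.1 v.ofLp.2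
  set ee := (WithLp.prodContinuousLinearEquiv 2 ℂ H₁ H₂) with hee
  set M : WithLp 2 (H₁ × H₂) →L[ℂ] WithLp 2 (H₁ × H₂) :=
    (ee.symm.toContinuousLinearMap.comp
      ((((adjoint A).comp (ContinuousLinearMap.fst ℂ H₁ H₂) +
          (adjoint B).comp (ContinuousLinearMap.snd ℂ H₁ H₂)).prod
        ((adjoint C).comp (ContinuousLinearMap.snd ℂ H₁ H₂))).comp
        ee.toContinuousLinearMap)) with hMdef
  have hM' : ∀ v : WithLp 2 (H₁ × H₂),
      M v = e (adjoint A v.ofLp.1 + adjoint B v.ofLp.2, adjoint C v.ofLp.2) := fun v => rfl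
  have hadj : adjoint L = M := by
    refine ((ContinuousLinearMap.eq_adjoint_iff M L).2 ?_).symm
    intro v w
    rw [hM' v, hL' w]
    simp only [he, WithLp.prod_inner_apply, WithLp.equiv_symm_apply, WithLp.ofLp_toLp,
      inner_add_left, inner_add_right, adjoint_inner_left]
    ring
  have hstar : star L = M := (ContinuousLinearMap.star_eq_adjoint L).trans hadj
  constructor
  · -- forward direction
    intro h
    rw [Unitary.mem_iff, hstar] at h
    have h1 : ∀ v, M (L v) = v := by
      intro v
      have := DFunLike.congr_fun h.1 v
      simpa [ContinuousLinearMap.mul_apply] using this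
    have h2 : ∀ v, L (M v) = v := by
      intro v
      have := DFunLike.congr_fun h.2 v
      simpa [ContinuousLinearMap.mul_apply] using this
    -- identities from M ∘ L = 1
    have k1 : ∀ x : H₁, adjoint A (A x) + adjoint B (B x) = x := by
      intro x
      have h0 := h1 (e (x, 0))
      rw [hL' (e (x,0)), hM'] at h0
      have := congrArg (fun z : WithLp 2 (H₁ × H₂) => z.ofLp.1) h0
      simpa [he] using this
    have k2 : ∀ x : H₁, adjoint C (B x) = 0 := by
      intro x
      have h0 := h1 (e (x, 0))
      rw [hL' (e (x,0)), hM'] at h0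
      have := congrArg (fun z : WithLp 2 (H₁ × H₂) => z.ofLp.2) h0
      simpa [he] using this
    have k4 : ∀ y : H₂, adjoint C (C y) = y := by
      intro y
      have h0 := h1 (e (0, y))
      rw [hL' (e (0,y)), hM'] at h0
      have := congrArg (fun z : WithLp 2 (H₁ × H₂) => z.ofLp.2) h0
      simpa [he, k2] using this
    -- identities from L ∘ M = 1
    have k5 : ∀ u : H₁, A (adjoint A u) = u := by
      intro u
      have h0 := h2 (e (u, 0))
      rw [hM' (e (u,0)), hL'] at h0
      have := congrArg (fun z : WithLp 2 (H₁ × H₂) => z.ofLp.1) h0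
      simpa [he] using this
    have k6 : ∀ u : H₁, B (adjoint A u) = 0 := by
      intro u
      have h0 := h2 (e (u, 0))
      rw [hM' (e (u,0)), hL'] at h0
      have := congrArg (fun z : WithLp 2 (H₁ × H₂) => z.ofLp.2) h0
      simpa [he] using this
    have k7 : ∀ w : H₂, A (adjoint B w) = 0 := by
      intro w
      have h0 := h2 (e (0, w))
      rw [hM' (e (0,w)), hL'] at h0
      have := congrArg (fun z : WithLp 2 (H₁ × H₂) => z.ofLp.1) h0
      simpa [he] using this
    have k8 : ∀ w : H₂, B (adjoint B w) + C (adjoint C w) = w := by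
      intro w
      have h0 := h2 (e (0, w))
      rw [hM' (e (0,w)), hL'] at h0
      have := congrArg (fun z : WithLp 2 (H₁ × H₂) => z.ofLp.2) h0
      simpa [he] using this
    refine ⟨by ext u; simpa using k5 u, by ext y; simpa using k4 y, ?_⟩
    -- construct V
    have hmem : ∀ x : LinearMap.ker (A : H₁ →ₗ[ℂ] H₁), B (x : H₁) ∈ (LinearMap.range (C : H₂ →ₗ[ℂ] H₂))ᗮ := by
      rintro ⟨x, hx⟩
      rw [Submodule.mem_orthogonal]
      rintro u ⟨y, rfl⟩
      rw [ContinuousLinearMap.coe_coe, ← ContinuousLinearMap.adjoint_inner_right, k2]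
      simp
    have hres : ∀ x : LinearMap.ker (A : H₁ →ₗ[ℂ] H₁), adjoint B (B (x : H₁)) = (x : H₁) := by
      rintro ⟨x, hx⟩
      have := k1 x
      rw [LinearMap.mem_ker, ContinuousLinearMap.coe_coe] at hx
      simpa [hx] using this
    have hnorm : ∀ x : LinearMap.ker (A : H₁ →ₗ[ℂ] H₁), ‖B (x : H₁)‖ = ‖(x : H₁)‖ := by
      intro x
      have hinner : (inner ℂ (B (x:H₁)) (B (x:H₁)) : ℂ) = inner ℂ (x:H₁) (x:H₁) := by
        rw [← ContinuousLinearMap.adjoint_inner_right, hres]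
      have h3 : ‖B (x:H₁)‖^2 = ‖(x:H₁)‖^2 := by
        rw [← inner_self_eq_norm_sq (𝕜 := ℂ), ← inner_self_eq_norm_sq (𝕜 := ℂ), hinner]
      calc ‖B (x:H₁)‖ = Real.sqrt (‖B (x:H₁)‖^2) := (Real.sqrt_sq (norm_nonneg _)).symm
        _ = Real.sqrt (‖(x:H₁)‖^2) := by rw [h3]
        _ = ‖(x:H₁)‖ := Real.sqrt_sq (norm_nonneg _)
    let g : (LinearMap.ker (A : H₁ →ₗ[ℂ] H₁)) →ₗᵢ[ℂ] ((LinearMap.range (C : H₂ →ₗ[ℂ] H₂))ᗮ : Submodule ℂ H₂) :=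
      { toLinearMap := LinearMap.codRestrict _
          (B.toLinearMap.comp (Submodule.subtype (LinearMap.ker (A : H₁ →ₗ[ℂ] H₁)))) hmem
        norm_map' := fun x => hnorm x }
    have hgsurj : Function.Surjective g := by
      rintro ⟨w, hw⟩
      have hCw : adjoint C w = 0 := by
        refine ext_inner_left ℂ fun y => ?_
        rw [ContinuousLinearMap.adjoint_inner_right]
        rw [Submodule.mem_orthogonal] at hw
        rw [hw (C y) ⟨y, rfl⟩, inner_zero_right]
      refine ⟨⟨adjoint B w, by simpa [LinearMap.mem_ker] using k7 w⟩, ?_⟩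
      apply Subtype.ext
      have h9 := k8 w
      rw [hCw, map_zero, add_zero] at h9
      show B (adjoint B w) = w
      exact h9
    refine ⟨LinearIsometryEquiv.ofSurjective g hgsurj, fun x => ?_⟩
    have hproj : ((Submodule.orthogonalProjectionOnto (LinearMap.ker (A : H₁ →ₗ[ℂ] H₁)) x : LinearMap.ker (A : H₁ →ₗ[ℂ] H₁)) : H₁)
        = x - adjoint A (A x) := by
      apply Submodule.eq_starProjection_of_mem_orthogonal
      · simp [LinearMap.mem_ker, map_sub, k5 (A x)]
      · rw [Submodule.mem_orthogonal]
        intro z hz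
        rw [LinearMap.mem_ker, ContinuousLinearMap.coe_coe] at hz
        have hxz : x - (x - adjoint A (A x)) = adjoint A (A x) := by abel
        rw [hxz, ContinuousLinearMap.adjoint_inner_right, hz, inner_zero_left]
    have hVal : ((LinearIsometryEquiv.ofSurjective g hgsurj)
        (Submodule.orthogonalProjectionOnto (LinearMap.ker (A : H₁ →ₗ[ℂ] H₁)) x) : H₂)
        = B ((Submodule.orthogonalProjectionOnto (LinearMap.ker (A : H₁ →ₗ[ℂ] H₁)) x : LinearMap.ker (A : H₁ →ₗ[ℂ] H₁)) : H₁) := rfl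
    rw [hVal, hproj, map_sub, k6, sub_zero]
  · -- converse direction
    rintro ⟨hA, hC, V, hB⟩
    have hA' : ∀ u, A (adjoint A u) = u := by
      intro u
      have := DFunLike.congr_fun hA u
      simpa using this
    have hC' : ∀ y, adjoint C (C y) = y := by
      intro y
      have := DFunLike.congr_fun hC y
      simpa using this
    set P := Submodule.orthogonalProjectionOnto (LinearMap.ker (A : H₁ →ₗ[ℂ] H₁)) with hPdef
    have hPk : ∀ x : H₁, A ((P x : LinearMap.ker (A : H₁ →ₗ[ℂ] H₁)) : H₁) = 0 :=
      fun x => LinearMap.mem_ker.1 (P x).2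
    have hBorth : ∀ x : H₁, B x ∈ (LinearMap.range (C : H₂ →ₗ[ℂ] H₂))ᗮ := fun x => hB x ▸ (V (P x)).2
    have hBC : ∀ (x : H₁) (y : H₂), (inner ℂ (B x) (C y) : ℂ) = 0 := by
      intro x y
      have h0 := (Submodule.mem_orthogonal _ _).1 (hBorth x) (C y) ⟨y, rfl⟩
      have h2 := congrArg (starRingEnd ℂ) h0
      simpa [inner_conj_symm] using h2
    have hCC : ∀ y y' : H₂, (inner ℂ (C y) (C y') : ℂ) = inner ℂ y y' := by
      intro y y'
      rw [← ContinuousLinearMap.adjoint_inner_right, hC']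
    have hfix : ∀ u : H₁, u ∈ (LinearMap.ker (A : H₁ →ₗ[ℂ] H₁))ᗮ → adjoint A (A u) = u := by
      intro u hu
      have hmem2 : adjoint A (A u) ∈ (LinearMap.ker (A : H₁ →ₗ[ℂ] H₁))ᗮ := by
        rw [Submodule.mem_orthogonal]
        intro z hz
        rw [LinearMap.mem_ker, ContinuousLinearMap.coe_coe] at hz
        rw [ContinuousLinearMap.adjoint_inner_right, hz, inner_zero_left]
      have hker : u - adjoint A (A u) ∈ LinearMap.ker (A : H₁ →ₗ[ℂ] H₁) := by
        simp [LinearMap.mem_ker, map_sub, hA']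
      have horth : u - adjoint A (A u) ∈ (LinearMap.ker (A : H₁ →ₗ[ℂ] H₁))ᗮ := Submodule.sub_mem _ hu hmem2
      have h0 : u - adjoint A (A u) = 0 := by
        have := (Submodule.mem_orthogonal _ _).1 horth _ hker
        exact inner_self_eq_zero.mp this
      have := sub_eq_zero.mp h0
      exact this.symm
    have hAA : ∀ x x' : H₁, (inner ℂ (A x) (A x') : ℂ)
        = inner ℂ (x - ((P x : LinearMap.ker (A : H₁ →ₗ[ℂ] H₁)) : H₁)) (x' - ((P x' : LinearMap.ker (A : H₁ →ₗ[ℂ] H₁)) : H₁)) := by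
      intro x x'
      have m1' : x' - ((P x' : LinearMap.ker (A : H₁ →ₗ[ℂ] H₁)) : H₁) ∈ (LinearMap.ker (A : H₁ →ₗ[ℂ] H₁))ᗮ :=
        Submodule.sub_starProjection_mem_orthogonal x'
      calc (inner ℂ (A x) (A x') : ℂ)
          = inner ℂ (A (x - ((P x : LinearMap.ker (A : H₁ →ₗ[ℂ] H₁)) : H₁))) (A (x' - ((P x' : LinearMap.ker (A : H₁ →ₗ[ℂ] H₁)) : H₁))) := by
            rw [map_sub, map_sub, hPk, hPk, sub_zero, sub_zero]
        _ = inner ℂ (x - ((P x : LinearMap.ker (A : H₁ →ₗ[ℂ] H₁)) : H₁))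
              (adjoint A (A (x' - ((P x' : LinearMap.ker (A : H₁ →ₗ[ℂ] H₁)) : H₁)))) :=
            (ContinuousLinearMap.adjoint_inner_right _ _ _).symm
        _ = _ := by rw [hfix _ m1']
    have hBB : ∀ x x' : H₁, (inner ℂ (B x) (B x') : ℂ)
        = inner ℂ ((P x : LinearMap.ker (A : H₁ →ₗ[ℂ] H₁)) : H₁) ((P x' : LinearMap.ker (A : H₁ →ₗ[ℂ] H₁)) : H₁) := by
      intro x x'
      rw [hB x, hB x']
      have : (inner ℂ ((V (P x) : ((LinearMap.range (C : H₂ →ₗ[ℂ] H₂))ᗮ : Submodule ℂ H₂)) : H₂)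
          ((V (P x') : ((LinearMap.range (C : H₂ →ₗ[ℂ] H₂))ᗮ : Submodule ℂ H₂)) : H₂) : ℂ)
          = inner ℂ (V (P x)) (V (P x')) := rfl
      rw [this, LinearIsometryEquiv.inner_map_map]
      rfl
    have hiso : ∀ v w : WithLp 2 (H₁ × H₂), (inner ℂ (L v) (L w) : ℂ) = inner ℂ v w := by
      intro v w
      rw [hL' v, hL' w]
      simp only [he, WithLp.prod_inner_apply, WithLp.equiv_symm_apply, WithLp.ofLp_toLp,
        inner_add_left, inner_add_right]
      have hCB : (inner ℂ (C v.ofLp.2) (B w.ofLp.1) : ℂ) = 0 :=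
        (Submodule.mem_orthogonal _ _).1 (hBorth w.ofLp.1) (C v.ofLp.2) ⟨v.ofLp.2, rfl⟩
      rw [hAA, hBB, hBC, hCB, hCC]
      have o1 : (inner ℂ (v.ofLp.1 - ((P v.ofLp.1 : LinearMap.ker (A : H₁ →ₗ[ℂ] H₁)) : H₁)) ((P w.ofLp.1 : LinearMap.ker (A : H₁ →ₗ[ℂ] H₁)) : H₁) : ℂ) = 0 :=
        (Submodule.mem_orthogonal' _ _).1 (Submodule.sub_starProjection_mem_orthogonal v.ofLp.1) _ (P w.ofLp.1).2
      have o2 : (inner ℂ ((P v.ofLp.1 : LinearMap.ker (A : H₁ →ₗ[ℂ] H₁)) : H₁) (w.ofLp.1 - ((P w.ofLp.1 : LinearMap.ker (A : H₁ →ₗ[ℂ] H₁)) : H₁)) : ℂ) = 0 :=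
        (Submodule.mem_orthogonal _ _).1 (Submodule.sub_starProjection_mem_orthogonal w.ofLp.1) _ (P v.ofLp.1).2
      have hsplit : (inner ℂ v.ofLp.1 w.ofLp.1 : ℂ)
          = inner ℂ (v.ofLp.1 - ((P v.ofLp.1 : LinearMap.ker (A : H₁ →ₗ[ℂ] H₁)) : H₁)) (w.ofLp.1 - ((P w.ofLp.1 : LinearMap.ker (A : H₁ →ₗ[ℂ] H₁)) : H₁))
            + inner ℂ ((P v.ofLp.1 : LinearMap.ker (A : H₁ →ₗ[ℂ] H₁)) : H₁) ((P w.ofLp.1 : LinearMap.ker (A : H₁ →ₗ[ℂ] H₁)) : H₁) := by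
        calc (inner ℂ v.ofLp.1 w.ofLp.1 : ℂ)
            = inner ℂ ((v.ofLp.1 - ((P v.ofLp.1 : LinearMap.ker (A : H₁ →ₗ[ℂ] H₁)) : H₁)) + ((P v.ofLp.1 : LinearMap.ker (A : H₁ →ₗ[ℂ] H₁)) : H₁))
                ((w.ofLp.1 - ((P w.ofLp.1 : LinearMap.ker (A : H₁ →ₗ[ℂ] H₁)) : H₁)) + ((P w.ofLp.1 : LinearMap.ker (A : H₁ →ₗ[ℂ] H₁)) : H₁)) := by
              rw [sub_add_cancel, sub_add_cancel]
          _ = _ := by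
              rw [inner_add_left, inner_add_right, inner_add_right, o1, o2]
              ring
      rw [hsplit]
      ring
    have hLL : star L * L = 1 := by
      ext v
      refine ext_inner_right ℂ fun w => ?_
      rw [ContinuousLinearMap.mul_apply, ContinuousLinearMap.one_apply, hstar, ← hadj,
        ContinuousLinearMap.adjoint_inner_left, hiso]
    have hsurjL : Function.Surjective L := by
      intro v
      have hw₂ : v.ofLp.2 - C (adjoint C v.ofLp.2) ∈ (LinearMap.range (C : H₂ →ₗ[ℂ] H₂))ᗮ := by
        rw [Submodule.mem_orthogonal]
        rintro _ ⟨z, rfl⟩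
        rw [ContinuousLinearMap.coe_coe, inner_sub_right, hCC, ContinuousLinearMap.adjoint_inner_right, sub_self]
      set k : LinearMap.ker (A : H₁ →ₗ[ℂ] H₁) := V.symm ⟨v.ofLp.2 - C (adjoint C v.ofLp.2), hw₂⟩ with hk
      refine ⟨e (adjoint A v.ofLp.1 + (k : H₁), adjoint C v.ofLp.2), ?_⟩
      rw [hL']
      have hx1 : A (adjoint A v.ofLp.1 + (k : H₁)) = v.ofLp.1 := by
        rw [map_add, hA', (by exact LinearMap.mem_ker.1 k.2 : A (k : H₁) = 0), add_zero]
      have hPx : P (adjoint A v.ofLp.1 + (k : H₁)) = k := by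
        have p1 : P (adjoint A v.ofLp.1) = 0 := by
          apply Submodule.orthogonalProjectionOnto_apply_of_mem_orthogonal
          rw [Submodule.mem_orthogonal]
          intro z hz
          rw [LinearMap.mem_ker, ContinuousLinearMap.coe_coe] at hz
          rw [ContinuousLinearMap.adjoint_inner_right, hz, inner_zero_left]
        have p2 : P ((k : H₁)) = k := Submodule.orthogonalProjectionOnto_mem_subspace_eq_self k
        rw [map_add, p1, p2, zero_add]
      have hx2 : B (adjoint A v.ofLp.1 + (k : H₁)) = v.ofLp.2 - C (adjoint C v.ofLp.2) := by
        rw [hB, hPx, hk, LinearIsometryEquiv.apply_symm_apply]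
      have hpair : (A (adjoint A v.ofLp.1 + (k : H₁)),
          B (adjoint A v.ofLp.1 + (k : H₁)) + C (adjoint C v.ofLp.2)) = (v.ofLp.1, v.ofLp.2) := by
        refine Prod.ext hx1 ?_
        rw [hx2, sub_add_cancel]
      simp only [he, WithLp.equiv_symm_apply, WithLp.ofLp_toLp]
      rw [hpair]
    rw [Unitary.mem_iff]
    refine ⟨hLL, ?_⟩
    have h1 : ∀ t, (star L) (L t) = t := by
      intro t
      have := DFunLike.congr_fun hLL t
      simpa [ContinuousLinearMap.mul_apply] using this
    ext v
    obtain ⟨t, rfl⟩ := hsurjL v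
    rw [ContinuousLinearMap.mul_apply, h1 t, ContinuousLinearMap.one_apply]
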